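/- Unfolding lemma: Let P be a finite connected poset with A = Min(P), B = Max(P) and dim(A,B) ≥ 2. Let A_0, B_1, A_1, …, A_{m−1}, B_m be the unfolding of P from some x_0 ∈ A ∪ B. Then there exists an index i such that dim(A_i, B_i) ≥ dim(A,B)/2 or dim(A_i, B_{i+1}) ≥ dim(A,B)/2. -/

import Mathlib

section Defs
variable (α : Type*) [PartialOrder α]

/-- `L` is a linear extension of the partial order on `α`. -/
def IsLinExt (L : LinearOrder α) : Prop := ∀ x y : α, x ≤ y → L.le x y

/-- The poset `α` is the intersection of `d` linear extensions. -/
def HasRealizer (d : ℕ) : Prop :=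
  ∃ Ls : Fin d → LinearOrder α, (∀ i, IsLinExt α (Ls i)) ∧
    ∀ x y : α, (∀ i, (Ls i).le x y) → x ≤ y

/-- The order dimension of the poset `α`. -/
noncomputable def pdim : ℕ := sInf {d | HasRealizer α d}

/-- `x` and `y` are incomparable. -/
def IncompP (x y : α) : Prop := ¬ x ≤ y ∧ ¬ y ≤ x

/-- A set of (incomparable) pairs is reversible if some linear extension reverses all pairs. -/
def ReversibleSet (I : Set (α × α)) : Prop :=
  ∃ L : LinearOrder α, IsLinExt α L ∧ ∀ p ∈ I, L.lt p.2 p.1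

/-- `I` can be partitioned into `d` reversible sets. -/
def RevPart (I : Set (α × α)) (d : ℕ) : Prop :=
  ∃ J : Fin d → Set (α × α), (⋃ i, J i) = I ∧
    (∀ i j, i ≠ j → Disjoint (J i) (J j)) ∧ ∀ i, ReversibleSet α (J i)

/-- The least number of reversible sets partitioning `I` (with `revDim ∅ = 1`). -/
noncomputable def revDim (I : Set (α × α)) : ℕ := sInf {d | 0 < d ∧ RevPart α I d}

/-- Incomparable pairs `(a,b)` with `a ∈ A` and `b ∈ B`. -/
def IncPairs (A B : Set α) : Set (α × α) := {p | p.1 ∈ A ∧ p.2 ∈ B ∧ IncompP α p.1 p.2}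

noncomputable def dimAB (A B : Set α) : ℕ := revDim α (IncPairs α A B)

/-- The minimal elements of `α`. -/
def minimalSet : Set α := {x | ∀ y : α, y ≤ x → y = x}

/-- The maximal elements of `α`. -/
def maximalSet : Set α := {x | ∀ y : α, x ≤ y → y = x}

end Defs

section Unfold
variable (α : Type*) [PartialOrder α]

/-- The upset of a set. -/
def UpS (S : Set α) : Set α := {x | ∃ s ∈ S, s ≤ x}

/-- The downset of a set. -/
def DnS (S : Set α) : Set α := {x | ∃ s ∈ S, x ≤ s}

/-- The poset `α` is connected (w.r.t. its comparability/cover graph). -/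
def PosetConnected : Prop :=
  ∀ x y : α, Relation.ReflTransGen (fun u v : α => u ≤ v ∨ v ≤ u) x y

/-- Auxiliary recursion for the unfolding of `α` from starting sets `A0, B1`:
`unfoldAux A0 B1 i = ((A_i, B_{i+1}), (A_0 ∪ ⋯ ∪ A_i, B_1 ∪ ⋯ ∪ B_{i+1}))`. -/
def unfoldAux (A0 B1 : Set α) : ℕ → (Set α × Set α) × (Set α × Set α)
  | 0 => ((A0, B1), (A0, B1))
  | i + 1 =>
    let p := unfoldAux A0 B1 i
    let Ai : Set α := {a | a ∈ minimalSet α ∧ a ∉ p.2.1 ∧ ∃ b ∈ p.1.2, a ≤ b}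
    let Bi : Set α := {b | b ∈ maximalSet α ∧ b ∉ p.2.2 ∧ ∃ a ∈ Ai, a ≤ b}
    ((Ai, Bi), (p.2.1 ∪ Ai, p.2.2 ∪ Bi))

/-- The set `A_i` of the unfolding. -/
def uA (A0 B1 : Set α) (i : ℕ) : Set α := (unfoldAux α A0 B1 i).1.1

/-- The set `B_j` (for `j ≥ 1`) of the unfolding; `uB 0 = ∅` by convention. -/
def uB (A0 B1 : Set α) : ℕ → Set α
  | 0 => ∅
  | i + 1 => (unfoldAux α A0 B1 i).1.2

/-- The starting data of the unfolding of `α` from `x0 ∈ Min(α) ∪ Max(α)`. -/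
def UnfoldStart (x0 : α) (A0 B1 : Set α) : Prop :=
  (x0 ∈ minimalSet α ∧ A0 = {x0} ∧ B1 = {b | b ∈ maximalSet α ∧ x0 ≤ b}) ∨
  (x0 ∈ maximalSet α ∧ A0 = (∅ : Set α) ∧ B1 = {x0})

/-- `α(x)`: the least `i` with `x ∈ Up(A_i)`. -/
noncomputable def alphaF (A0 B1 : Set α) (x : α) : ℕ :=
  sInf {i | x ∈ UpS α (uA α A0 B1 i)}

/-- `β(x)`: the least `j ≥ 1` with `x ∈ D(B_j)`. -/
noncomputable def betaF (A0 B1 : Set α) (x : α) : ℕ :=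
  sInf {j | 1 ≤ j ∧ x ∈ DnS α (uB α A0 B1 j)}

/-- `y` is a valid parent of `x` in the unfolding. -/
def IsParentOf (A0 B1 : Set α) (x y : α) : Prop :=
  (betaF α A0 B1 x = alphaF α A0 B1 x ∧ x ⋖ y ∧
      ∃ b ∈ uB α A0 B1 (betaF α A0 B1 x), y ≤ b) ∨
  (betaF α A0 B1 x = alphaF α A0 B1 x + 1 ∧ y ⋖ x ∧
      ∃ a ∈ uA α A0 B1 (alphaF α A0 B1 x), a ≤ y)

end Unfold

section AuxRev
variable {α : Type*}

lemma mkLin (s : α → α → Prop) (h : IsLinearOrder α s) :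
    ∃ L : LinearOrder α, (∀ x y, L.le x y ↔ s x y) ∧ (∀ x y, L.lt x y ↔ s x y ∧ ¬ s y x) := by
  haveI := h
  let L : LinearOrder α :=
  { le := s
    lt := fun a b => s a b ∧ ¬ s b a
    le_refl := fun a => refl_of s a
    le_trans := fun a b c => trans_of s
    lt_iff_le_not_ge := fun a b => Iff.rfl
    le_antisymm := fun a b => antisymm_of s
    le_total := fun a b => total_of s a b
    toDecidableLE := fun a b => Classical.dec _ }
  exact ⟨L, fun x y => Iff.rfl, fun x y => Iff.rfl⟩

variable [PartialOrder α]

lemma exLinExt : ∃ L : LinearOrder α, IsLinExt α L := by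
  obtain ⟨s, hs, hle⟩ := extend_partialOrder ((· ≤ ·) : α → α → Prop)
  obtain ⟨L, hL, -⟩ := mkLin s hs
  exact ⟨L, fun x y hxy => (hL x y).2 (hle _ _ hxy)⟩

lemma reversible_empty : ReversibleSet α (∅ : Set (α × α)) := by
  obtain ⟨L, hL⟩ := exLinExt (α := α)
  exact ⟨L, hL, by simp⟩

lemma rev_singleton {a b : α} (h : IncompP α a b) : ReversibleSet α {(a, b)} := by
  classical
  have hne : a ≠ b := fun he => h.1 (he ▸ le_refl a)
  set step : α → α → Prop := fun u v => u ≤ v ∨ (u = b ∧ v = a) with hstepdef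
  set r : α → α → Prop := fun u v => Relation.ReflTransGen step u v with hrdef
  have claim : ∀ u v, r u v → u ≤ v ∨ (u ≤ b ∧ a ≤ v) := by
    intro u v huv
    induction huv with
    | refl => exact Or.inl (le_refl u)
    | @tail c w hc hcw ih =>
        rcases ih with h1 | ⟨h1, h2⟩
        · rcases hcw with h3 | ⟨h3, h4⟩
          · exact Or.inl (h1.trans h3)
          · exact Or.inr ⟨le_of_le_of_eq h1 h3, le_of_eq h4.symm⟩
        · rcases hcw with h3 | ⟨h3, h4⟩
          · exact Or.inr ⟨h1, h2.trans h3⟩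
          · exact absurd (le_of_le_of_eq h2 h3) h.1
  haveI : IsPartialOrder α r :=
  { refl := fun x => Relation.ReflTransGen.refl
    trans := fun x y z => Relation.ReflTransGen.trans
    antisymm := by
      intro u v huv hvu
      rcases claim _ _ huv with h1 | ⟨h1, h2⟩ <;> rcases claim _ _ hvu with h3 | ⟨h3, h4⟩
      · exact le_antisymm h1 h3
      · exact absurd ((h4.trans h1).trans h3) h.1
      · exact absurd ((h2.trans h3).trans h1) h.1
      · exact absurd (h2.trans h3) h.1 }
  obtain ⟨s, hs, hrs⟩ := extend_partialOrder r
  obtain ⟨L, hLle, hLlt⟩ := mkLin s hs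
  refine ⟨L, fun x y hxy => (hLle x y).2 (hrs _ _ (Relation.ReflTransGen.single (Or.inl hxy))), ?_⟩
  rintro p hp
  rcases Set.mem_singleton_iff.1 hp with rfl
  have h1 : s b a := hrs _ _ (Relation.ReflTransGen.single (Or.inr ⟨rfl, rfl⟩))
  refine (hLlt _ _).2 ⟨h1, fun h2 => ?_⟩
  haveI := hs
  exact hne (antisymm_of s h2 h1)

lemma rev_of_levels (φ : α → ℤ) (S : Set (α × α))
    (hmono : ∀ u v : α, u ≤ v → φ u ≤ φ v)
    (hS : ∀ p ∈ S, φ p.2 ≤ φ p.1 ∧ p.1 ≠ p.2)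
    (hlev : ∀ n : ℤ, ∃ L : LinearOrder α, IsLinExt α L ∧
      ∀ p ∈ S, φ p.1 = n → φ p.2 = n → L.lt p.2 p.1) :
    ReversibleSet α S := by
  classical
  choose Ls hLs hrev using hlev
  set step : α → α → Prop := fun u v => u ≤ v ∨ (v, u) ∈ S with hstep
  have stepmono : ∀ u v, step u v → φ u ≤ φ v := by
    rintro u v (h | h)
    · exact hmono u v h
    · exact (hS _ h).1
  set r : α → α → Prop := fun u v => Relation.ReflTransGen step u v with hr
  have rmono : ∀ u v, r u v → φ u ≤ φ v := by
    intro u v h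
    induction h with
    | refl => exact le_refl _
    | tail _ hbc ih => exact le_trans ih (stepmono _ _ hbc)
  have key : ∀ u v, r u v → ∀ n : ℤ, φ u = n → φ v = n → (Ls n).le u v := by
    intro u v h
    induction h with
    | refl => intro n _ _; exact (Ls n).le_refl _
    | @tail b c hub hbc ih =>
        intro n hu hc
        have hb : φ b = n := le_antisymm (hc ▸ stepmono _ _ hbc) (hu ▸ rmono _ _ hub)
        have h1 : (Ls n).le u b := ih n hu hb
        have h2 : (Ls n).le b c := by
          rcases hbc with h | h
          · exact hLs n _ _ h
          · exact @le_of_lt α (Ls n).toPreorder _ _ (hrev n _ h hc hb)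
        exact (Ls n).le_trans _ _ _ h1 h2
  haveI : IsPartialOrder α r :=
  { refl := fun a => Relation.ReflTransGen.refl
    trans := fun a b c => Relation.ReflTransGen.trans
    antisymm := by
      intro a b hab hba
      have h1 := rmono _ _ hab
      have h2 := rmono _ _ hba
      have hn : φ b = φ a := le_antisymm h2 h1
      exact (Ls (φ a)).le_antisymm _ _ (key _ _ hab (φ a) rfl hn)
        (key _ _ hba (φ a) hn rfl) }
  obtain ⟨s, hs, hrs⟩ := extend_partialOrder r
  obtain ⟨L, hLle, hLlt⟩ := mkLin s hs
  refine ⟨L, fun x y hxy => (hLle x y).2 (hrs _ _ (Relation.ReflTransGen.single (Or.inl hxy))), ?_⟩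
  intro p hp
  have h1 : s p.2 p.1 := hrs _ _ (Relation.ReflTransGen.single (Or.inr hp))
  refine (hLlt _ _).2 ⟨h1, fun h2 => (hS p hp).2 ?_⟩
  haveI := hs
  exact antisymm_of s h2 h1

end AuxRev
section AuxPart
variable {α : Type*} [PartialOrder α]

lemma revPart_pad {I : Set (α × α)} {d d' : ℕ} (h : RevPart α I d) (hdd : d ≤ d') :
    RevPart α I d' := by
  classical
  obtain ⟨J, hu, hdis, hrev⟩ := h
  refine ⟨fun k => if hk : (k : ℕ) < d then J ⟨k, hk⟩ else ∅, ?_, ?_, ?_⟩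
  · ext p
    simp only [Set.mem_iUnion]
    constructor
    · rintro ⟨k, hk⟩
      by_cases hlt : (k : ℕ) < d
      · rw [dif_pos hlt] at hk
        exact hu ▸ Set.mem_iUnion.2 ⟨_, hk⟩
      · rw [dif_neg hlt] at hk; exact absurd hk (Set.notMem_empty p)
    · intro hp
      obtain ⟨i, hi⟩ := Set.mem_iUnion.1 (hu ▸ hp)
      refine ⟨⟨i.1, lt_of_lt_of_le i.2 hdd⟩, ?_⟩
      rw [dif_pos (show ((⟨i.1, lt_of_lt_of_le i.2 hdd⟩ : Fin d') : ℕ) < d from i.2)]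
      exact hi
  · intro k k' hkk'
    dsimp only
    by_cases h1 : (k : ℕ) < d <;> by_cases h2 : (k' : ℕ) < d
    · rw [dif_pos h1, dif_pos h2]
      exact hdis _ _ (fun he => hkk' (Fin.ext (show (k:ℕ) = k' from congrArg (@Fin.val d) he)))
    · rw [dif_pos h1, dif_neg h2]; exact Set.disjoint_empty _
    · rw [dif_neg h1]; exact Set.empty_disjoint _
    · rw [dif_neg h1]; exact Set.empty_disjoint _
  · intro k
    dsimp only
    by_cases h1 : (k : ℕ) < d
    · rw [dif_pos h1]; exact hrev _
    · rw [dif_neg h1]; exact reversible_empty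

lemma revPart_exists [Fintype α] {I : Set (α × α)} (hI : ∀ p ∈ I, IncompP α p.1 p.2) :
    ∃ d, 0 < d ∧ RevPart α I d := by
  classical
  by_cases hI0 : I = ∅
  · refine ⟨1, one_pos, fun _ => ∅, by simp [hI0], by simp, fun _ => reversible_empty⟩
  · haveI : Fintype I := I.toFinite.fintype
    have hne : Nonempty I := Set.nonempty_coe_sort.2 (Set.nonempty_iff_ne_empty.2 hI0)
    set n := Fintype.card I with hn
    have hnpos : 0 < n := Fintype.card_pos
    set e := Fintype.equivFin I with he
    refine ⟨n, hnpos, fun k => {(e.symm k : α × α)}, ?_, ?_, ?_⟩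
    · ext p
      simp only [Set.mem_iUnion, Set.mem_singleton_iff]
      constructor
      · rintro ⟨k, rfl⟩; exact (e.symm k).2
      · intro hp; exact ⟨e ⟨p, hp⟩, by simp⟩
    · intro k k' hkk'
      rw [Set.disjoint_left]
      rintro p hp hp'
      rcases Set.mem_singleton_iff.1 hp with rfl
      exact hkk' (e.symm.injective (Subtype.coe_injective (Set.mem_singleton_iff.1 hp')))
    · intro k
      have hmem : ((e.symm k : α × α)) ∈ I := (e.symm k).2
      have := rev_singleton (a := (e.symm k : α × α).1) (b := (e.symm k : α × α).2)
        (hI _ hmem)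
      simpa using this

lemma revDim_spec [Fintype α] {I : Set (α × α)} (hI : ∀ p ∈ I, IncompP α p.1 p.2) :
    0 < revDim α I ∧ RevPart α I (revDim α I) := by
  obtain ⟨d, hd, hp⟩ := revPart_exists hI
  exact Nat.sInf_mem (⟨d, hd, hp⟩ : Set.Nonempty {d | 0 < d ∧ RevPart α I d})

lemma revDim_le {I : Set (α × α)} {d : ℕ} (h0 : 0 < d) (h : RevPart α I d) :
    revDim α I ≤ d := Nat.sInf_le ⟨h0, h⟩

lemma revPart_union2 {I1 I2 : Set (α × α)} {d1 d2 : ℕ} (h1 : RevPart α I1 d1)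
    (h2 : RevPart α I2 d2) (hd : Disjoint I1 I2) : RevPart α (I1 ∪ I2) (d1 + d2) := by
  classical
  obtain ⟨J1, hu1, hdis1, hrev1⟩ := h1
  obtain ⟨J2, hu2, hdis2, hrev2⟩ := h2
  have hsub1 : ∀ i, J1 i ⊆ I1 := fun i => hu1 ▸ Set.subset_iUnion J1 i
  have hsub2 : ∀ i, J2 i ⊆ I2 := fun i => hu2 ▸ Set.subset_iUnion J2 i
  refine ⟨fun k => if hk : (k : ℕ) < d1 then J1 ⟨k, hk⟩ else
    J2 ⟨(k : ℕ) - d1, by have := k.2; omega⟩, ?_, ?_, ?_⟩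
  · ext p
    simp only [Set.mem_iUnion, Set.mem_union]
    constructor
    · rintro ⟨k, hk⟩
      by_cases hlt : (k : ℕ) < d1
      · rw [dif_pos hlt] at hk
        exact Or.inl (hsub1 _ hk)
      · rw [dif_neg hlt] at hk
        exact Or.inr (hsub2 _ hk)
    · rintro (hp | hp)
      · obtain ⟨i, hi⟩ := Set.mem_iUnion.1 (hu1 ▸ hp)
        refine ⟨⟨i.1, by omega⟩, ?_⟩
        rw [dif_pos (show ((⟨i.1, by omega⟩ : Fin (d1 + d2)) : ℕ) < d1 from i.2)]
        exact hi
      · obtain ⟨j, hj⟩ := Set.mem_iUnion.1 (hu2 ▸ hp)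
        refine ⟨⟨d1 + j.1, by omega⟩, ?_⟩
        rw [dif_neg (show ¬ ((⟨d1 + j.1, by omega⟩ : Fin (d1 + d2)) : ℕ) < d1 by simp)]
        convert hj using 2
        exact Fin.ext (by simp)
  · intro k k' hkk'
    dsimp only
    by_cases hl1 : (k : ℕ) < d1 <;> by_cases hl2 : (k' : ℕ) < d1
    · rw [dif_pos hl1, dif_pos hl2]
      exact hdis1 _ _ (fun he => hkk' (Fin.ext (show (k:ℕ) = k' from congrArg (@Fin.val d1) he)))
    · rw [dif_pos hl1, dif_neg hl2]
      exact Set.disjoint_of_subset (hsub1 _) (hsub2 _) hd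
    · rw [dif_neg hl1, dif_pos hl2]
      exact Set.disjoint_of_subset (hsub2 _) (hsub1 _) hd.symm
    · rw [dif_neg hl1, dif_neg hl2]
      refine hdis2 _ _ (fun he => hkk' (Fin.ext ?_))
      have hv : (k : ℕ) - d1 = (k' : ℕ) - d1 := congrArg (@Fin.val d2) he
      omega
  · intro k
    dsimp only
    by_cases hl : (k : ℕ) < d1
    · rw [dif_pos hl]; exact hrev1 _
    · rw [dif_neg hl]; exact hrev2 _

end AuxPart
section AuxUnfold
variable {α : Type*} [PartialOrder α] {x0 : α} {A0 B1 : Set α}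

lemma uA0 : uA α A0 B1 0 = A0 := rfl
lemma uB1' : uB α A0 B1 1 = B1 := rfl

lemma uAsucc (i : ℕ) : uA α A0 B1 (i+1) =
    {a | a ∈ minimalSet α ∧ a ∉ (unfoldAux α A0 B1 i).2.1 ∧ ∃ b ∈ uB α A0 B1 (i+1), a ≤ b} := rfl

lemma uBsucc (i : ℕ) : uB α A0 B1 (i+2) =
    {b | b ∈ maximalSet α ∧ b ∉ (unfoldAux α A0 B1 i).2.2 ∧ ∃ a ∈ uA α A0 B1 (i+1), a ≤ b} := rfl

lemma cum21 (i : ℕ) (x : α) :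
    x ∈ (unfoldAux α A0 B1 i).2.1 ↔ ∃ j ≤ i, x ∈ uA α A0 B1 j := by
  induction i with
  | zero =>
      constructor
      · exact fun h => ⟨0, le_refl 0, h⟩
      · rintro ⟨j, hj, h⟩
        rcases Nat.le_zero.1 hj with rfl
        exact h
  | succ i ih =>
      have : (unfoldAux α A0 B1 (i+1)).2.1 = (unfoldAux α A0 B1 i).2.1 ∪ uA α A0 B1 (i+1) := rfl
      rw [this]
      constructor
      · rintro (h | h)
        · obtain ⟨j, hj, h⟩ := ih.1 h
          exact ⟨j, by omega, h⟩
        · exact ⟨i+1, le_refl _, h⟩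
      · rintro ⟨j, hj, h⟩
        rcases Nat.lt_or_ge j (i+1) with hlt | hge
        · exact Or.inl (ih.2 ⟨j, by omega, h⟩)
        · have : j = i + 1 := by omega
          exact Or.inr (this ▸ h)

lemma cum22 (i : ℕ) (x : α) :
    x ∈ (unfoldAux α A0 B1 i).2.2 ↔ ∃ j, 1 ≤ j ∧ j ≤ i + 1 ∧ x ∈ uB α A0 B1 j := by
  induction i with
  | zero =>
      constructor
      · exact fun h => ⟨1, le_refl 1, le_refl 1, h⟩
      · rintro ⟨j, hj1, hj2, h⟩
        have : j = 1 := by omega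
        subst this
        exact h
  | succ i ih =>
      have : (unfoldAux α A0 B1 (i+1)).2.2 = (unfoldAux α A0 B1 i).2.2 ∪ uB α A0 B1 (i+2) := rfl
      rw [this]
      constructor
      · rintro (h | h)
        · obtain ⟨j, hj1, hj2, h⟩ := ih.1 h
          exact ⟨j, hj1, by omega, h⟩
        · exact ⟨i+2, by omega, le_refl _, h⟩
      · rintro ⟨j, hj1, hj2, h⟩
        rcases Nat.lt_or_ge j (i+2) with hlt | hge
        · exact Or.inl (ih.2 ⟨j, hj1, by omega, h⟩)
        · have : j = i + 2 := by omega
          exact Or.inr (this ▸ h)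

variable (hs : UnfoldStart α x0 A0 B1)
include hs

lemma uA_min {i : ℕ} {a : α} (h : a ∈ uA α A0 B1 i) : a ∈ minimalSet α := by
  cases i with
  | zero =>
      rcases hs with ⟨hx, hA, hB⟩ | ⟨hx, hA, hB⟩
      · rw [uA0, hA] at h
        rcases Set.mem_singleton_iff.1 h with rfl
        exact hx
      · rw [uA0, hA] at h
        exact absurd h (Set.notMem_empty a)
  | succ i => rw [uAsucc] at h; exact h.1

lemma uB_max {j : ℕ} {b : α} (h : b ∈ uB α A0 B1 j) : b ∈ maximalSet α := by
  match j with
  | 0 => exact absurd h (Set.notMem_empty b)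
  | 1 =>
      rcases hs with ⟨hx, hA, hB⟩ | ⟨hx, hA, hB⟩
      · rw [uB1', hB] at h
        exact h.1
      · rw [uB1', hB] at h
        rcases Set.mem_singleton_iff.1 h with rfl
        exact hx
  | (i+2) => rw [uBsucc] at h; exact h.1

omit hs

lemma uA_disj {i i' : ℕ} {a : α} (h : a ∈ uA α A0 B1 i) (h' : a ∈ uA α A0 B1 i') : i = i' := by
  have key : ∀ {m m' : ℕ}, m < m' → a ∈ uA α A0 B1 m → a ∈ uA α A0 B1 m' → False := by
    intro m m' hlt hm hm'
    match m', hlt with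
    | (k+1), hlt =>
        rw [uAsucc] at hm'
        exact hm'.2.1 ((cum21 k a).2 ⟨m, by omega, hm⟩)
  rcases Nat.lt_trichotomy i i' with hlt | heq | hgt
  · exact absurd (key hlt h h') not_false
  · exact heq
  · exact absurd (key hgt h' h) not_false

lemma uB_disj {j j' : ℕ} {b : α} (h : b ∈ uB α A0 B1 j) (h' : b ∈ uB α A0 B1 j') : j = j' := by
  have key : ∀ {m m' : ℕ}, m < m' → b ∈ uB α A0 B1 m → b ∈ uB α A0 B1 m' → False := by
    intro m m' hlt hm hm'
    match m, m', hlt with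
    | 0, m', _ => exact absurd hm (Set.notMem_empty b)
    | (m+1), (m''+2), hlt =>
        rw [uBsucc] at hm'
        exact hm'.2.1 ((cum22 m'' b).2 ⟨m+1, by omega, by omega, hm⟩)
  rcases Nat.lt_trichotomy j j' with hlt | heq | hgt
  · exact absurd (key hlt h h') not_false
  · exact heq
  · exact absurd (key hgt h' h) not_false

end AuxUnfold
section AuxFin
variable {α : Type*} [Fintype α] [PartialOrder α] {x0 : α} {A0 B1 : Set α}

lemma exists_min_le (x : α) : ∃ a ∈ minimalSet α, a ≤ x := by
  have wf : WellFounded ((· < ·) : α → α → Prop) := IsWellFounded.wf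
  obtain ⟨m, hm, hmin⟩ := wf.has_min {y | y ≤ x} ⟨x, le_refl x⟩
  refine ⟨m, fun y hy => ?_, hm⟩
  by_contra hne
  exact hmin y (hy.trans hm) (lt_of_le_of_ne hy hne)

lemma exists_max_ge (x : α) : ∃ b ∈ maximalSet α, x ≤ b := by
  have wf : WellFounded ((· > ·) : α → α → Prop) := IsWellFounded.wf
  obtain ⟨m, hm, hmax⟩ := wf.has_min {y | x ≤ y} ⟨x, le_refl x⟩
  refine ⟨m, fun y hy => ?_, hm⟩
  by_contra hne
  exact hmax y (hm.trans hy) (lt_of_le_of_ne hy (fun h => hne h.symm))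

variable (hs : UnfoldStart α x0 A0 B1)
include hs

lemma uA_below {i : ℕ} {a : α} (h : a ∈ uA α A0 B1 i) :
    ∃ b ∈ uB α A0 B1 (max i 1), a ≤ b := by
  cases i with
  | zero =>
      rcases hs with ⟨hx, hA, hB⟩ | ⟨hx, hA, hB⟩
      · rw [uA0, hA] at h
        rcases Set.mem_singleton_iff.1 h with rfl
        obtain ⟨b, hb, hxb⟩ := exists_max_ge a
        exact ⟨b, by rw [show max 0 1 = 1 from rfl, uB1', hB]; exact ⟨hb, hxb⟩, hxb⟩
      · rw [uA0, hA] at h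
        exact absurd h (Set.notMem_empty a)
  | succ i =>
      rw [uAsucc] at h
      obtain ⟨b, hb, hab⟩ := h.2.2
      exact ⟨b, by rw [show max (i+1) 1 = i+1 by omega]; exact hb, hab⟩

lemma lemQ {a b : α} {j : ℕ} (ha : a ∈ minimalSet α) (hab : a ≤ b)
    (hb : b ∈ uB α A0 B1 j) (hj : 1 ≤ j) : ∃ i, i ≤ j ∧ a ∈ uA α A0 B1 i := by
  match j, hj with
  | (k+1), _ =>
    by_cases hcum : a ∈ (unfoldAux α A0 B1 k).2.1
    · obtain ⟨i, hi, h⟩ := (cum21 k a).1 hcum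
      exact ⟨i, by omega, h⟩
    · exact ⟨k+1, le_refl _, by rw [uAsucc]; exact ⟨ha, hcum, b, hb, hab⟩⟩

lemma lemQ' {a b : α} {i : ℕ} (hb : b ∈ maximalSet α) (hab : a ≤ b)
    (ha : a ∈ uA α A0 B1 i) : ∃ j, 1 ≤ j ∧ j ≤ i + 1 ∧ b ∈ uB α A0 B1 j := by
  cases i with
  | zero =>
      rcases hs with ⟨hx, hA, hB⟩ | ⟨hx, hA, hB⟩
      · rw [uA0, hA] at ha
        rcases Set.mem_singleton_iff.1 ha with rfl
        exact ⟨1, le_refl 1, by omega, by rw [uB1', hB]; exact ⟨hb, hab⟩⟩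
      · rw [uA0, hA] at ha
        exact absurd ha (Set.notMem_empty a)
  | succ k =>
      by_cases hcum : b ∈ (unfoldAux α A0 B1 k).2.2
      · obtain ⟨j, hj1, hj2, h⟩ := (cum22 k b).1 hcum
        exact ⟨j, hj1, by omega, h⟩
      · exact ⟨k+2, by omega, le_refl _, by rw [uBsucc]; exact ⟨hb, hcum, a, ha, hab⟩⟩

variable (hc : PosetConnected α)
include hc

lemma hitAB (x : α) :
    (∃ i, x ∈ UpS α (uA α A0 B1 i)) ∧ (∃ j, 1 ≤ j ∧ x ∈ DnS α (uB α A0 B1 j)) := by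
  have stepA : ∀ y : α, (∃ i, y ∈ UpS α (uA α A0 B1 i)) →
      (∃ j, 1 ≤ j ∧ y ∈ DnS α (uB α A0 B1 j)) := by
    rintro y ⟨i, a, ha, hay⟩
    obtain ⟨b, hb, hyb⟩ := exists_max_ge y
    obtain ⟨j, hj1, _, hbj⟩ := lemQ' hs hb (hay.trans hyb) ha
    exact ⟨j, hj1, b, hbj, hyb⟩
  have stepB : ∀ y : α, (∃ j, 1 ≤ j ∧ y ∈ DnS α (uB α A0 B1 j)) →
      (∃ i, y ∈ UpS α (uA α A0 B1 i)) := by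
    rintro y ⟨j, hj1, b, hbj, hyb⟩
    obtain ⟨a, ha, hay⟩ := exists_min_le y
    obtain ⟨i, _, hai⟩ := lemQ hs ha (hay.trans hyb) hbj hj1
    exact ⟨i, a, hai, hay⟩
  have base : (∃ i, x0 ∈ UpS α (uA α A0 B1 i)) := by
    rcases hs with ⟨hx, hA, hB⟩ | ⟨hx, hA, hB⟩
    · exact ⟨0, x0, by rw [uA0, hA]; exact rfl, le_refl x0⟩
    · apply stepB
      exact ⟨1, le_refl 1, x0, by rw [uB1', hB]; exact rfl, le_refl x0⟩
  have main : ∀ y : α, (∃ i, y ∈ UpS α (uA α A0 B1 i)) := by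
    intro y
    have hpath := hc x0 y
    induction hpath with
    | refl => exact base
    | @tail b c hxb hbc ih =>
        rcases hbc with hle | hle
        · obtain ⟨i, a, ha, hab⟩ := ih
          exact ⟨i, a, ha, hab.trans hle⟩
        · obtain ⟨j, hj1, bb, hbb, hbbb⟩ := stepA b ih
          exact stepB c ⟨j, hj1, bb, hbb, hle.trans hbbb⟩
  exact ⟨main x, stepA x (main x)⟩

lemma beta_mem (x : α) : betaF α A0 B1 x ∈ {j | 1 ≤ j ∧ x ∈ DnS α (uB α A0 B1 j)} :=
  Nat.sInf_mem (hitAB hs hc x).2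

lemma alpha_mem (x : α) : alphaF α A0 B1 x ∈ {i | x ∈ UpS α (uA α A0 B1 i)} :=
  Nat.sInf_mem (hitAB hs hc x).1

lemma beta_mono {u v : α} (huv : u ≤ v) : betaF α A0 B1 u ≤ betaF α A0 B1 v := by
  obtain ⟨hj1, b, hb, hvb⟩ := beta_mem hs hc v
  exact Nat.sInf_le ⟨hj1, b, hb, huv.trans hvb⟩

lemma alpha_antimono {u v : α} (huv : u ≤ v) : alphaF α A0 B1 v ≤ alphaF α A0 B1 u := by
  obtain ⟨a, ha, hau⟩ := alpha_mem hs hc u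
  exact Nat.sInf_le ⟨a, ha, hau.trans huv⟩

lemma beta_B {j : ℕ} {b : α} (hj : 1 ≤ j) (hb : b ∈ uB α A0 B1 j) : betaF α A0 B1 b = j := by
  have h1 : betaF α A0 B1 b ≤ j := Nat.sInf_le ⟨hj, b, hb, le_refl b⟩
  obtain ⟨hj1, b', hb', hbb'⟩ := beta_mem hs hc b
  have : b' = b := uB_max hs hb b' hbb'
  subst this
  exact (uB_disj hb' hb) ▸ rfl

lemma beta_A {i : ℕ} {a : α} (hi : 1 ≤ i) (ha : a ∈ uA α A0 B1 i) : betaF α A0 B1 a = i := by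
  obtain ⟨b, hb, hab⟩ := uA_below hs ha
  rw [show max i 1 = i by omega] at hb
  have h1 : betaF α A0 B1 a ≤ i := Nat.sInf_le ⟨hi, b, hb, hab⟩
  obtain ⟨hj1, b', hb', hab'⟩ := beta_mem hs hc a
  obtain ⟨i', hi', hai'⟩ := lemQ hs (uA_min hs ha) hab' hb' hj1
  have : i' = i := uA_disj hai' ha
  omega

lemma alpha_A {i : ℕ} {a : α} (ha : a ∈ uA α A0 B1 i) : alphaF α A0 B1 a = i := by
  have h1 : alphaF α A0 B1 a ≤ i := Nat.sInf_le ⟨a, ha, le_refl a⟩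
  obtain ⟨a', ha', haa'⟩ := alpha_mem hs hc a
  have : a' = a := uA_min hs ha a' haa'
  subst this
  exact (uA_disj ha' ha) ▸ rfl

lemma alpha_B_pair {i : ℕ} {a b : α} (ha : a ∈ uA α A0 B1 i) (hb : b ∈ uB α A0 B1 (i+1)) :
    alphaF α A0 B1 b = i := by
  have hup : alphaF α A0 B1 b ≤ i := by
    cases i with
    | zero =>
        rcases hs with ⟨hx, hA, hB⟩ | ⟨hx, hA, hB⟩
        · rw [uB1', hB] at hb
          exact Nat.sInf_le ⟨x0, by rw [uA0, hA]; exact rfl, hb.2⟩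
        · rw [uA0, hA] at ha
          exact absurd ha (Set.notMem_empty a)
    | succ k =>
        rw [uBsucc] at hb
        obtain ⟨a', ha', hab'⟩ := hb.2.2
        exact Nat.sInf_le ⟨a', ha', hab'⟩
  obtain ⟨a'', ha'', hab''⟩ := alpha_mem hs hc b
  obtain ⟨j, hj1, hj2, hbj⟩ := lemQ' hs (uB_max hs hb) hab'' ha''
  have : j = i + 1 := uB_disj hbj hb
  omega

lemma alpha_B_far {j : ℕ} {b : α} (hj : 2 ≤ j) (hb : b ∈ uB α A0 B1 j) :
    alphaF α A0 B1 b = j - 1 := by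
  match j, hj with
  | (k+2), _ =>
    have hb' := hb
    rw [uBsucc] at hb'
    obtain ⟨a, ha, hab⟩ := hb'.2.2
    have h1 : alphaF α A0 B1 b ≤ k + 1 := Nat.sInf_le ⟨a, ha, hab⟩
    obtain ⟨a'', ha'', hab''⟩ := alpha_mem hs hc b
    obtain ⟨j', hj1, hj2, hbj⟩ := lemQ' hs (uB_max hs hb) hab'' ha''
    have : j' = k + 2 := uB_disj hbj hb
    omega

end AuxFin
section AuxMain
variable {α : Type*} [Fintype α] [PartialOrder α] {x0 : α} {A0 B1 : Set α}
variable (hs : UnfoldStart α x0 A0 B1) (hc : PosetConnected α)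
include hs hc

lemma diag_revpart {d : ℕ} (hd : 0 < d) (R : ℕ → Fin d → Set (α × α))
    (hRu : ∀ i, (⋃ k, R i k) = IncPairs α (uA α A0 B1 i) (uB α A0 B1 i))
    (hRdis : ∀ i (k k' : Fin d), k ≠ k' → Disjoint (R i k) (R i k'))
    (hRrev : ∀ i k, ReversibleSet α (R i k)) :
    RevPart α ((⋃ i, IncPairs α (uA α A0 B1 i) (uB α A0 B1 i)) ∪
      {p | p ∈ IncPairs α (minimalSet α) (maximalSet α) ∧
        ∃ i j, 1 ≤ j ∧ j < i ∧ p.1 ∈ uA α A0 B1 i ∧ p.2 ∈ uB α A0 B1 j}) d := by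
  classical
  set FarD : Set (α × α) := {p | p ∈ IncPairs α (minimalSet α) (maximalSet α) ∧
        ∃ i j, 1 ≤ j ∧ j < i ∧ p.1 ∈ uA α A0 B1 i ∧ p.2 ∈ uB α A0 B1 j} with hFarD
  have hmemR : ∀ i (k : Fin d) p, p ∈ R i k →
      p.1 ∈ uA α A0 B1 i ∧ p.2 ∈ uB α A0 B1 i ∧ IncompP α p.1 p.2 := by
    intro i k p hp
    have : p ∈ IncPairs α (uA α A0 B1 i) (uB α A0 B1 i) := (hRu i) ▸ Set.mem_iUnion.2 ⟨k, hp⟩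
    exact this
  have hRclass : ∀ i (k : Fin d) p, p ∈ R i k →
      betaF α A0 B1 p.1 = i ∧ betaF α A0 B1 p.2 = i ∧ p.1 ≠ p.2 := by
    intro i k p hp
    obtain ⟨h1, h2, hinc⟩ := hmemR i k p hp
    have hi1 : 1 ≤ i := by
      cases i with
      | zero => exact absurd h2 (Set.notMem_empty _)
      | succ m => omega
    exact ⟨beta_A hs hc hi1 h1, beta_B hs hc hi1 h2,
      fun he => hinc.1 (he ▸ le_refl p.1)⟩
  have hFclass : ∀ p ∈ FarD, betaF α A0 B1 p.2 < betaF α A0 B1 p.1 ∧ p.1 ≠ p.2 := by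
    rintro p ⟨⟨_, _, hinc⟩, i, j, hj1, hji, h1, h2⟩
    rw [beta_A hs hc (by omega) h1, beta_B hs hc hj1 h2]
    exact ⟨hji, fun he => hinc.1 (he ▸ le_refl p.1)⟩
  refine ⟨fun k => (⋃ i, R i k) ∪ (if (k : ℕ) = 0 then FarD else ∅), ?_, ?_, ?_⟩
  · ext p
    simp only [Set.mem_iUnion, Set.mem_union]
    constructor
    · rintro ⟨k, hk | hk⟩
      · obtain ⟨i, hik⟩ := hk
        exact Or.inl ⟨i, hmemR i k p hik⟩
      · by_cases h0 : (k : ℕ) = 0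
        · rw [if_pos h0] at hk; exact Or.inr hk
        · rw [if_neg h0] at hk; exact absurd hk (Set.notMem_empty p)
    · rintro (⟨i, hp⟩ | hp)
      · have hpu : p ∈ ⋃ k, R i k := by rw [hRu i]; exact hp
        obtain ⟨k, hk⟩ := Set.mem_iUnion.1 hpu
        exact ⟨k, Or.inl ⟨i, hk⟩⟩
      · exact ⟨⟨0, hd⟩, Or.inr (by rw [if_pos rfl]; exact hp)⟩
  · intro k k' hkk'
    rw [Set.disjoint_left]
    rintro p (hp | hp) (hp' | hp')
    · obtain ⟨i, hik⟩ := Set.mem_iUnion.1 hp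
      obtain ⟨i', hik'⟩ := Set.mem_iUnion.1 hp'
      have : i = i' := uA_disj (hmemR i k p hik).1 (hmemR i' k' p hik').1
      subst this
      exact Set.disjoint_left.1 (hRdis i k k' hkk') hik hik'
    · by_cases h0 : (k' : ℕ) = 0
      · rw [if_pos h0] at hp'
        obtain ⟨i, hik⟩ := Set.mem_iUnion.1 hp
        obtain ⟨⟨_, _, _⟩, i'', j, hj1, hji, h1, h2⟩ := hp'
        have he1 : i'' = i := uA_disj h1 (hmemR i k p hik).1
        have he2 : j = i := uB_disj h2 (hmemR i k p hik).2.1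
        omega
      · rw [if_neg h0] at hp'; exact hp'
    · by_cases h0 : (k : ℕ) = 0
      · rw [if_pos h0] at hp
        obtain ⟨i', hik'⟩ := Set.mem_iUnion.1 hp'
        obtain ⟨⟨_, _, _⟩, i'', j, hj1, hji, h1, h2⟩ := hp
        have he1 : i'' = i' := uA_disj h1 (hmemR i' k' p hik').1
        have he2 : j = i' := uB_disj h2 (hmemR i' k' p hik').2.1
        omega
      · rw [if_neg h0] at hp; exact hp
    · by_cases h0 : (k : ℕ) = 0 <;> by_cases h0' : (k' : ℕ) = 0
      · exact absurd (Fin.ext (h0.trans h0'.symm)) hkk'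
      · rw [if_neg h0'] at hp'; exact hp'
      · rw [if_neg h0] at hp; exact hp
      · rw [if_neg h0] at hp; exact hp
  · intro k
    apply rev_of_levels (fun x => (betaF α A0 B1 x : ℤ))
    · intro u v huv
      exact_mod_cast beta_mono hs hc huv
    · rintro p (hp | hp)
      · obtain ⟨i, hik⟩ := Set.mem_iUnion.1 hp
        obtain ⟨hb1, hb2, hne⟩ := hRclass i k p hik
        rw [hb1, hb2]
        exact ⟨le_refl _, hne⟩
      · by_cases h0 : (k : ℕ) = 0
        · rw [if_pos h0] at hp
          obtain ⟨hlt, hne⟩ := hFclass p hp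
          exact ⟨by exact_mod_cast le_of_lt hlt, hne⟩
        · rw [if_neg h0] at hp; exact absurd hp (Set.notMem_empty p)
    · intro n
      obtain ⟨L, hL, hrev⟩ := hRrev n.toNat k
      refine ⟨L, hL, ?_⟩
      rintro p (hp | hp) h1 h2
      · obtain ⟨i, hik⟩ := Set.mem_iUnion.1 hp
        obtain ⟨hb1, hb2, hne⟩ := hRclass i k p hik
        rw [hb1] at h1
        have : i = n.toNat := by omega
        subst this
        exact hrev p hik
      · by_cases h0 : (k : ℕ) = 0
        · rw [if_pos h0] at hp
          obtain ⟨hlt, hne⟩ := hFclass p hp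
          exfalso; omega
        · rw [if_neg h0] at hp; exact absurd hp (Set.notMem_empty p)

lemma off_revpart {d : ℕ} (hd : 0 < d) (R : ℕ → Fin d → Set (α × α))
    (hRu : ∀ i, (⋃ k, R i k) = IncPairs α (uA α A0 B1 i) (uB α A0 B1 (i+1)))
    (hRdis : ∀ i (k k' : Fin d), k ≠ k' → Disjoint (R i k) (R i k'))
    (hRrev : ∀ i k, ReversibleSet α (R i k)) :
    RevPart α ((⋃ i, IncPairs α (uA α A0 B1 i) (uB α A0 B1 (i+1))) ∪
      {p | p ∈ IncPairs α (minimalSet α) (maximalSet α) ∧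
        ∃ i j, i + 2 ≤ j ∧ p.1 ∈ uA α A0 B1 i ∧ p.2 ∈ uB α A0 B1 j}) d := by
  classical
  set FarU : Set (α × α) := {p | p ∈ IncPairs α (minimalSet α) (maximalSet α) ∧
        ∃ i j, i + 2 ≤ j ∧ p.1 ∈ uA α A0 B1 i ∧ p.2 ∈ uB α A0 B1 j} with hFarU
  have hmemR : ∀ i (k : Fin d) p, p ∈ R i k →
      p.1 ∈ uA α A0 B1 i ∧ p.2 ∈ uB α A0 B1 (i+1) ∧ IncompP α p.1 p.2 := by
    intro i k p hp
    have : p ∈ IncPairs α (uA α A0 B1 i) (uB α A0 B1 (i+1)) := (hRu i) ▸ Set.mem_iUnion.2 ⟨k, hp⟩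
    exact this
  have hRclass : ∀ i (k : Fin d) p, p ∈ R i k →
      alphaF α A0 B1 p.1 = i ∧ alphaF α A0 B1 p.2 = i ∧ p.1 ≠ p.2 := by
    intro i k p hp
    obtain ⟨h1, h2, hinc⟩ := hmemR i k p hp
    exact ⟨alpha_A hs hc h1, alpha_B_pair hs hc h1 h2,
      fun he => hinc.1 (he ▸ le_refl p.1)⟩
  have hFclass : ∀ p ∈ FarU, alphaF α A0 B1 p.1 < alphaF α A0 B1 p.2 ∧ p.1 ≠ p.2 := by
    rintro p ⟨⟨_, _, hinc⟩, i, j, hji, h1, h2⟩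
    rw [alpha_A hs hc h1, alpha_B_far hs hc (by omega) h2]
    exact ⟨by omega, fun he => hinc.1 (he ▸ le_refl p.1)⟩
  refine ⟨fun k => (⋃ i, R i k) ∪ (if (k : ℕ) = 0 then FarU else ∅), ?_, ?_, ?_⟩
  · ext p
    simp only [Set.mem_iUnion, Set.mem_union]
    constructor
    · rintro ⟨k, hk | hk⟩
      · obtain ⟨i, hik⟩ := hk
        exact Or.inl ⟨i, hmemR i k p hik⟩
      · by_cases h0 : (k : ℕ) = 0
        · rw [if_pos h0] at hk; exact Or.inr hk
        · rw [if_neg h0] at hk; exact absurd hk (Set.notMem_empty p)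
    · rintro (⟨i, hp⟩ | hp)
      · have hpu : p ∈ ⋃ k, R i k := by rw [hRu i]; exact hp
        obtain ⟨k, hk⟩ := Set.mem_iUnion.1 hpu
        exact ⟨k, Or.inl ⟨i, hk⟩⟩
      · exact ⟨⟨0, hd⟩, Or.inr (by rw [if_pos rfl]; exact hp)⟩
  · intro k k' hkk'
    rw [Set.disjoint_left]
    rintro p (hp | hp) (hp' | hp')
    · obtain ⟨i, hik⟩ := Set.mem_iUnion.1 hp
      obtain ⟨i', hik'⟩ := Set.mem_iUnion.1 hp'
      have : i = i' := uA_disj (hmemR i k p hik).1 (hmemR i' k' p hik').1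
      subst this
      exact Set.disjoint_left.1 (hRdis i k k' hkk') hik hik'
    · by_cases h0 : (k' : ℕ) = 0
      · rw [if_pos h0] at hp'
        obtain ⟨i, hik⟩ := Set.mem_iUnion.1 hp
        obtain ⟨⟨_, _, _⟩, i'', j, hji, h1, h2⟩ := hp'
        have he1 : i'' = i := uA_disj h1 (hmemR i k p hik).1
        have he2 : j = i + 1 := uB_disj h2 (hmemR i k p hik).2.1
        omega
      · rw [if_neg h0] at hp'; exact hp'
    · by_cases h0 : (k : ℕ) = 0
      · rw [if_pos h0] at hp
        obtain ⟨i', hik'⟩ := Set.mem_iUnion.1 hp'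
        obtain ⟨⟨_, _, _⟩, i'', j, hji, h1, h2⟩ := hp
        have he1 : i'' = i' := uA_disj h1 (hmemR i' k' p hik').1
        have he2 : j = i' + 1 := uB_disj h2 (hmemR i' k' p hik').2.1
        omega
      · rw [if_neg h0] at hp; exact hp
    · by_cases h0 : (k : ℕ) = 0 <;> by_cases h0' : (k' : ℕ) = 0
      · exact absurd (Fin.ext (h0.trans h0'.symm)) hkk'
      · rw [if_neg h0'] at hp'; exact hp'
      · rw [if_neg h0] at hp; exact hp
      · rw [if_neg h0] at hp; exact hp
  · intro k
    apply rev_of_levels (fun x => -(alphaF α A0 B1 x : ℤ))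
    · intro u v huv
      have := alpha_antimono hs hc huv
      omega
    · rintro p (hp | hp)
      · obtain ⟨i, hik⟩ := Set.mem_iUnion.1 hp
        obtain ⟨hb1, hb2, hne⟩ := hRclass i k p hik
        rw [hb1, hb2]
        exact ⟨le_refl _, hne⟩
      · by_cases h0 : (k : ℕ) = 0
        · rw [if_pos h0] at hp
          obtain ⟨hlt, hne⟩ := hFclass p hp
          exact ⟨by omega, hne⟩
        · rw [if_neg h0] at hp; exact absurd hp (Set.notMem_empty p)
    · intro n
      obtain ⟨L, hL, hrev⟩ := hRrev (-n).toNat k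
      refine ⟨L, hL, ?_⟩
      rintro p (hp | hp) h1 h2
      · obtain ⟨i, hik⟩ := Set.mem_iUnion.1 hp
        obtain ⟨hb1, hb2, hne⟩ := hRclass i k p hik
        rw [hb1] at h1
        have : i = (-n).toNat := by omega
        subst this
        exact hrev p hik
      · by_cases h0 : (k : ℕ) = 0
        · rw [if_pos h0] at hp
          obtain ⟨hlt, hne⟩ := hFclass p hp
          exfalso; omega
        · rw [if_neg h0] at hp; exact absurd hp (Set.notMem_empty p)

lemma coverDO :
    (((⋃ i, IncPairs α (uA α A0 B1 i) (uB α A0 B1 i)) ∪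
      {p | p ∈ IncPairs α (minimalSet α) (maximalSet α) ∧
        ∃ i j, 1 ≤ j ∧ j < i ∧ p.1 ∈ uA α A0 B1 i ∧ p.2 ∈ uB α A0 B1 j}) ∪
     ((⋃ i, IncPairs α (uA α A0 B1 i) (uB α A0 B1 (i+1))) ∪
      {p | p ∈ IncPairs α (minimalSet α) (maximalSet α) ∧
        ∃ i j, i + 2 ≤ j ∧ p.1 ∈ uA α A0 B1 i ∧ p.2 ∈ uB α A0 B1 j})) =
    IncPairs α (minimalSet α) (maximalSet α) := by
  apply Set.eq_of_subset_of_subset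
  · rintro p ((hp | hp) | (hp | hp))
    · obtain ⟨i, h1, h2, hinc⟩ := Set.mem_iUnion.1 hp
      exact ⟨uA_min hs h1, uB_max hs h2, hinc⟩
    · exact hp.1
    · obtain ⟨i, h1, h2, hinc⟩ := Set.mem_iUnion.1 hp
      exact ⟨uA_min hs h1, uB_max hs h2, hinc⟩
    · exact hp.1
  · rintro p hp
    obtain ⟨hpmin, hpmax, hinc⟩ := hp
    obtain ⟨j0, hj0, b, hbj0, hpb⟩ := (hitAB hs hc p.1).2
    obtain ⟨i, _, hi⟩ := lemQ hs hpmin hpb hbj0 hj0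
    obtain ⟨i0, a, hai0, hap⟩ := (hitAB hs hc p.2).1
    obtain ⟨j, hj1, _, hbj⟩ := lemQ' hs hpmax hap hai0
    rcases Nat.lt_trichotomy j i with hlt | heq | hgt
    · exact Or.inl (Or.inr ⟨⟨hpmin, hpmax, hinc⟩, i, j, hj1, hlt, hi, hbj⟩)
    · subst heq
      exact Or.inl (Or.inl (Set.mem_iUnion.2 ⟨j, hi, hbj, hinc⟩))
    · rcases Nat.lt_or_ge j (i + 2) with hlt2 | hge2
      · have : j = i + 1 := by omega
        subst this
        exact Or.inr (Or.inl (Set.mem_iUnion.2 ⟨i, hi, hbj, hinc⟩))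
      · exact Or.inr (Or.inr ⟨⟨hpmin, hpmax, hinc⟩, i, j, hge2, hi, hbj⟩)

lemma disjDO :
    Disjoint
    ((⋃ i, IncPairs α (uA α A0 B1 i) (uB α A0 B1 i)) ∪
      {p | p ∈ IncPairs α (minimalSet α) (maximalSet α) ∧
        ∃ i j, 1 ≤ j ∧ j < i ∧ p.1 ∈ uA α A0 B1 i ∧ p.2 ∈ uB α A0 B1 j})
    ((⋃ i, IncPairs α (uA α A0 B1 i) (uB α A0 B1 (i+1))) ∪
      {p | p ∈ IncPairs α (minimalSet α) (maximalSet α) ∧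
        ∃ i j, i + 2 ≤ j ∧ p.1 ∈ uA α A0 B1 i ∧ p.2 ∈ uB α A0 B1 j}) := by
  rw [Set.disjoint_left]
  rintro p hp hp'
  have hD : ∃ i j, j ≤ i ∧ p.1 ∈ uA α A0 B1 i ∧ p.2 ∈ uB α A0 B1 j := by
    rcases hp with hp | hp
    · obtain ⟨i, h1, h2, _⟩ := Set.mem_iUnion.1 hp
      exact ⟨i, i, le_refl i, h1, h2⟩
    · obtain ⟨_, i, j, hj1, hji, h1, h2⟩ := hp
      exact ⟨i, j, by omega, h1, h2⟩
  have hO : ∃ i j, i + 1 ≤ j ∧ p.1 ∈ uA α A0 B1 i ∧ p.2 ∈ uB α A0 B1 j := by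
    rcases hp' with hp' | hp'
    · obtain ⟨i, h1, h2, _⟩ := Set.mem_iUnion.1 hp'
      exact ⟨i, i + 1, le_refl _, h1, h2⟩
    · obtain ⟨_, i, j, hji, h1, h2⟩ := hp'
      exact ⟨i, j, by omega, h1, h2⟩
  obtain ⟨i, j, hji, h1, h2⟩ := hD
  obtain ⟨i', j', hji', h1', h2'⟩ := hO
  have : i = i' := uA_disj h1 h1'
  have : j = j' := uB_disj h2 h2'
  omega

end AuxMain
/-- Unfolding lemma: if `dim(A,B) ≥ 2` then some unfolding class pair
satisfies `dim(A_i,B_i) ≥ dim(A,B)/2` or `dim(A_i,B_{i+1}) ≥ dim(A,B)/2`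
(stated multiplicatively: `dim(A,B) ≤ 2 · dim(A_i,B_i)` etc.). -/
theorem stmt11 {α : Type*} [Fintype α] [PartialOrder α] [Nontrivial α]
    (hconn : PosetConnected α)
    (x0 : α) (A0 B1 : Set α) (hstart : UnfoldStart α x0 A0 B1)
    (hdim : 2 ≤ dimAB α (minimalSet α) (maximalSet α)) :
    ∃ i : ℕ,
      dimAB α (minimalSet α) (maximalSet α) ≤ 2 * dimAB α (uA α A0 B1 i) (uB α A0 B1 i) ∨
      dimAB α (minimalSet α) (maximalSet α) ≤ 2 * dimAB α (uA α A0 B1 i) (uB α A0 B1 (i + 1)) := by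
  classical
  by_contra hcon
  push_neg at hcon
  set D := dimAB α (minimalSet α) (maximalSet α) with hD
  have hspecD : ∀ i, 0 < dimAB α (uA α A0 B1 i) (uB α A0 B1 i) ∧
      RevPart α (IncPairs α (uA α A0 B1 i) (uB α A0 B1 i))
        (dimAB α (uA α A0 B1 i) (uB α A0 B1 i)) :=
    fun i => revDim_spec (fun p hp => hp.2.2)
  have hspecO : ∀ i, 0 < dimAB α (uA α A0 B1 i) (uB α A0 B1 (i+1)) ∧
      RevPart α (IncPairs α (uA α A0 B1 i) (uB α A0 B1 (i+1)))
        (dimAB α (uA α A0 B1 i) (uB α A0 B1 (i+1))) :=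
    fun i => revDim_spec (fun p hp => hp.2.2)
  set d := (D - 1) / 2 with hd_def
  have hd1 : 1 ≤ d := by
    have h0 := (hcon 0).1
    have h1 := (hspecD 0).1
    omega
  have hpartD : ∀ i, ∃ J : Fin d → Set (α × α),
      (⋃ k, J k) = IncPairs α (uA α A0 B1 i) (uB α A0 B1 i) ∧
      (∀ k k', k ≠ k' → Disjoint (J k) (J k')) ∧ ∀ k, ReversibleSet α (J k) :=
    fun i => revPart_pad (hspecD i).2 (by have := (hcon i).1; omega)
  have hpartO : ∀ i, ∃ J : Fin d → Set (α × α),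
      (⋃ k, J k) = IncPairs α (uA α A0 B1 i) (uB α A0 B1 (i+1)) ∧
      (∀ k k', k ≠ k' → Disjoint (J k) (J k')) ∧ ∀ k, ReversibleSet α (J k) :=
    fun i => revPart_pad (hspecO i).2 (by have := (hcon i).2; omega)
  choose R hRu hRdis hRrev using hpartD
  choose R' hR'u hR'dis hR'rev using hpartO
  have hrpD := diag_revpart hstart hconn (by omega : 0 < d) R hRu hRdis hRrev
  have hrpO := off_revpart hstart hconn (by omega : 0 < d) R' hR'u hR'dis hR'rev
  have hun := revPart_union2 hrpD hrpO (disjDO hstart hconn)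
  rw [coverDO hstart hconn] at hun
  have hle : D ≤ d + d := revDim_le (by omega) hun
  have h0 := (hcon 0).1
  have h1 := (hspecD 0).1
  omega
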